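/- The theta group consists exactly of the Möbius transformations z ↦ (az+b)/(cz+d) with integer a,b,c,d, ad − bc = 1, and (a,b,c,d) ≡ (1,0,0,1) or (0,1,1,0) mod 2; equivalently, the subgroup of PSL(2,ℤ) generated by z ↦ −1/z and z ↦ z + 2 equals the set of such transformations. -/

import Mathlib

open Filter Topology OnePoint

/-- Inverse on ℚ ∪ {∞} (`Option.none` = ∞): 1/∞ = 0 and 1/0 = ∞. -/
def cfInv : Option ℚ → Option ℚ
  | Option.none => Option.some 0
  | Option.some q => if q = 0 then Option.none else Option.some q⁻¹

/-- Value of the finite continued fraction [b₁,…,bₙ] in ℚ ∪ {∞},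
with `cfVal [] = Option.none` (that is, ∞). -/
def cfVal : List ℤ → Option ℚ
  | [] => Option.none
  | b :: t => (cfInv (cfVal t)).map (fun q => (b : ℚ) + q)

/-- Embed ℚ ∪ {∞} into the extended real line ℝ ∪ {∞}. -/
def toOP : Option ℚ → OnePoint ℝ
  | Option.none => ∞
  | Option.some q => ((q : ℝ) : OnePoint ℝ)

/-- The n-th convergent (value of the first n+1 terms) of the continued fraction
with coefficients `b 0, b 1, …`. -/
def cfConv (b : ℕ → ℤ) (n : ℕ) : Option ℚ := cfVal ((List.range (n + 1)).map b)

/-- `b 0, b 1, …` is an even-integer continued fraction. -/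
def IsEICF (b : ℕ → ℤ) : Prop := (∀ i, Even (b i)) ∧ ∀ i ≥ 1, b i ≠ 0

/-- The even-integer continued fraction `b` is an expansion of `x`:
its convergents tend to `x` in the extended real line. -/
def IsEICFExpansion (b : ℕ → ℤ) (x : OnePoint ℝ) : Prop :=
  IsEICF b ∧ Tendsto (fun n => toOP (cfConv b n)) atTop (𝓝 x)


abbrev SL2Z := Matrix.SpecialLinearGroup (Fin 2) ℤ

/-- The matrix of s(z) = −1/z. -/
def Smat : SL2Z := ⟨!![0, -1; 1, 0], by norm_num [Matrix.det_fin_two_of]⟩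

/-- The matrix of h(z) = z + 2. -/
def Hmat : SL2Z := ⟨!![1, 2; 0, 1], by norm_num [Matrix.det_fin_two_of]⟩

/-- PSL(2,ℤ), the modular group. -/
abbrev PSL2Z := SL2Z ⧸ Subgroup.center SL2Z

/-- The projection SL(2,ℤ) → PSL(2,ℤ). -/
abbrev toPSL : SL2Z →* PSL2Z := QuotientGroup.mk' (Subgroup.center SL2Z)


namespace ThetaAux

abbrev SL2F2 := Matrix.SpecialLinearGroup (Fin 2) (ZMod 2)

noncomputable abbrev red : SL2Z →* SL2F2 :=
  Matrix.SpecialLinearGroup.map (Int.castRingHom (ZMod 2))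

def Wmat : SL2F2 := ⟨!![0, 1; 1, 0], by decide⟩

lemma red_apply (M : SL2Z) (i j : Fin 2) :
    ((red M : Matrix (Fin 2) (Fin 2) (ZMod 2)) i j) = ((M : Matrix (Fin 2) (Fin 2) ℤ) i j : ZMod 2) := by
  simp [Matrix.SpecialLinearGroup.map]
  rfl

/-- The theta subgroup of SL(2,ℤ). -/
def ΘS : Subgroup SL2Z := Subgroup.closure {Smat, Hmat}

lemma Smat_mem : Smat ∈ ΘS := Subgroup.subset_closure (by simp)
lemma Hmat_mem : Hmat ∈ ΘS := Subgroup.subset_closure (by simp)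

lemma Smat_sq : Smat * Smat = (-1 : SL2Z) := by
  ext i j
  fin_cases i <;> fin_cases j <;>
    simp [Smat, Matrix.mul_apply, Fin.sum_univ_two] <;> rfl

lemma neg_one_mem : (-1 : SL2Z) ∈ ΘS := Smat_sq ▸ Subgroup.mul_mem _ Smat_mem Smat_mem

/-- H-power matrices. -/
def Hm (n : ℤ) : SL2Z := ⟨!![1, 2*n; 0, 1], by simp [Matrix.det_fin_two_of]⟩

lemma Hm_mul (m n : ℤ) : Hm m * Hm n = Hm (m + n) := by
  ext i j
  rw [Matrix.SpecialLinearGroup.coe_mul]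
  fin_cases i <;> fin_cases j <;>
    simp [Hm, Matrix.mul_apply, Fin.sum_univ_two] <;> ring

lemma Hm_zero : Hm 0 = 1 := by
  ext i j; fin_cases i <;> fin_cases j <;> simp [Hm]

lemma Hm_one : Hm 1 = Hmat := by
  ext i j; fin_cases i <;> fin_cases j <;> simp [Hm, Hmat]

lemma Hm_mem (n : ℤ) : Hm n ∈ ΘS := by
  induction n using Int.induction_on with
  | zero => rw [Hm_zero]; exact Subgroup.one_mem _
  | succ k ih => rw [← Hm_mul, Hm_one]; exact Subgroup.mul_mem _ ih Hmat_mem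
  | pred k ih =>
      have : Hm (-k - 1) = Hm (-k) * (Hm 1)⁻¹ := by
        rw [eq_mul_inv_iff_mul_eq, Hm_mul]; ring_nf
      rw [this, Hm_one]
      exact Subgroup.mul_mem _ ih (Subgroup.inv_mem _ Hmat_mem)

/-- Parity condition. -/
def C (M : SL2Z) : Prop := red M = 1 ∨ red M = Wmat

lemma red_Hm (n : ℤ) : red (Hm n) = 1 := by
  ext i j
  rw [red_apply]
  fin_cases i <;> fin_cases j <;> simp [red_apply, Hm] <;>
    exact Or.inl (by decide)

lemma red_Smat : red Smat = Wmat := by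
  ext i j
  fin_cases i <;> fin_cases j <;> simp [red_apply, Smat, Wmat] <;> decide

lemma WW : Wmat * Wmat = 1 := by
  ext i j; fin_cases i <;> fin_cases j <;> decide

lemma C_smul_S {M : SL2Z} (h : C M) : C (Smat * M) := by
  rcases h with h | h <;> simp only [C, map_mul, red_Smat, h]
  · right; simp
  · left; exact WW

lemma C_smul_Hm {M : SL2Z} (n : ℤ) (h : C M) : C (Hm n * M) := by
  rcases h with h | h <;> simp only [C, map_mul, red_Hm, h, one_mul]
  · left; trivial
  · right; trivial

lemma C_neg {M : SL2Z} (h : C M) : C (-M) := by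
  rw [show -M = (-1 : SL2Z) * M from (neg_one_mul M).symm]
  have hr : red (-1 : SL2Z) = 1 := by
    rw [← Smat_sq, map_mul, red_Smat]; exact WW
  rcases h with h | h <;> simp only [C, map_mul, hr, h, one_mul]
  · left; trivial
  · right; trivial

end ThetaAux

namespace ThetaAux

/-- Forward: members of the theta group satisfy the parity condition. -/
lemma C_of_mem {M : SL2Z} (h : M ∈ ΘS) : C M := by
  have hle : ΘS ≤ Subgroup.comap red (Subgroup.closure {Wmat}) := by
    rw [ΘS, Subgroup.closure_le]
    rintro x (rfl | rfl)
    · simp only [Set.mem_preimage, SetLike.mem_coe, Subgroup.mem_comap, red_Smat]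
      exact Subgroup.subset_closure rfl
    · rw [← Hm_one]
      simp only [Set.mem_preimage, SetLike.mem_coe, Subgroup.mem_comap, red_Hm]
      exact Subgroup.one_mem _
  have hx : red M ∈ Subgroup.closure {Wmat} := hle h
  have key : ∀ x : SL2F2, x ∈ Subgroup.closure {Wmat} → x = 1 ∨ x = Wmat := by
    intro x hx
    induction hx using Subgroup.closure_induction with
    | mem y hy => exact Or.inr hy
    | one => exact Or.inl rfl
    | mul y z hy hz ihy ihz =>
        rcases ihy with rfl | rfl <;> rcases ihz with rfl | rfl
        · left; simp
        · right; simp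
        · right; simp
        · left; exact WW
    | inv y hy ihy =>
        rcases ihy with rfl | rfl
        · left; simp
        · right; rw [eq_comm, eq_inv_iff_mul_eq_one]; exact WW
  exact key _ hx

lemma center_eq {z : SL2Z} (hz : z ∈ Subgroup.center SL2Z) : z = 1 ∨ z = -1 := by
  obtain ⟨r, hr, hs⟩ := (Matrix.SpecialLinearGroup.mem_center_iff).mp hz
  have hr' : r = 1 ∨ r = -1 := by
    have := Int.isUnit_iff.mp (IsUnit.of_mul_eq_one r (by rw [← sq]; simpa using hr))
    tauto
  rcases hr' with rfl | rfl
  · left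
    ext i j
    rw [← hs]
    simp
  · right
    ext i j
    rw [← hs]
    fin_cases i <;> fin_cases j <;> simp

lemma psl_iff (M : SL2Z) :
    toPSL M ∈ Subgroup.closure {toPSL Smat, toPSL Hmat} ↔ M ∈ ΘS := by
  have hmap : Subgroup.closure {toPSL Smat, toPSL Hmat} = ΘS.map toPSL := by
    rw [ΘS, MonoidHom.map_closure, Set.image_insert_eq, Set.image_singleton]
  rw [hmap]
  constructor
  · rintro hM
    obtain ⟨N, hN, hNM⟩ := Subgroup.mem_map.mp hM
    rw [QuotientGroup.mk'_eq_mk'] at hNM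
    obtain ⟨z, hz, hzM⟩ := hNM
    rcases center_eq hz with rfl | rfl
    · rw [mul_one] at hzM; exact hzM ▸ hN
    · rw [← hzM]
      exact Subgroup.mul_mem _ hN neg_one_mem
  · exact fun h => Subgroup.mem_map_of_mem _ h

end ThetaAux

namespace ThetaAux

lemma entry_cast {M : SL2Z} {X : SL2F2} (h : red M = X) (i j : Fin 2) :
    ((M : Matrix (Fin 2) (Fin 2) ℤ) i j : ZMod 2) = (X : Matrix (Fin 2) (Fin 2) (ZMod 2)) i j := by
  rw [← red_apply, h]

lemma red_eq_of_entries {M : SL2Z} {X : SL2F2}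
    (h : ∀ i j, ((M : Matrix (Fin 2) (Fin 2) ℤ) i j : ZMod 2) =
      (X : Matrix (Fin 2) (Fin 2) (ZMod 2)) i j) : red M = X := by
  ext i j; rw [red_apply]; exact h i j

lemma even_iff_cast {n : ℤ} : Even n ↔ (n : ZMod 2) = 0 := by
  rw [ZMod.intCast_zmod_eq_zero_iff_dvd n 2]
  constructor
  · rintro ⟨k, rfl⟩
    exact ⟨k, by push_cast; ring⟩
  · rintro ⟨k, hk⟩
    exact ⟨k, by push_cast at hk; omega⟩

lemma odd_iff_cast {n : ℤ} : Odd n ↔ (n : ZMod 2) = 1 := by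
  rw [← Int.not_even_iff_odd, even_iff_cast]
  generalize (n : ZMod 2) = x
  revert x; decide

lemma C_iff (M : SL2Z) : C M ↔
    ((Odd ((M : Matrix (Fin 2) (Fin 2) ℤ) 0 0) ∧ Even ((M : Matrix (Fin 2) (Fin 2) ℤ) 0 1) ∧
        Even ((M : Matrix (Fin 2) (Fin 2) ℤ) 1 0) ∧ Odd ((M : Matrix (Fin 2) (Fin 2) ℤ) 1 1)) ∨
       (Even ((M : Matrix (Fin 2) (Fin 2) ℤ) 0 0) ∧ Odd ((M : Matrix (Fin 2) (Fin 2) ℤ) 0 1) ∧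
        Odd ((M : Matrix (Fin 2) (Fin 2) ℤ) 1 0) ∧ Even ((M : Matrix (Fin 2) (Fin 2) ℤ) 1 1))) := by
  constructor
  · rintro (h | h)
    · left
      refine ⟨odd_iff_cast.mpr ?_, even_iff_cast.mpr ?_, even_iff_cast.mpr ?_,
        odd_iff_cast.mpr ?_⟩ <;> (rw [entry_cast h]; simp)
    · right
      refine ⟨even_iff_cast.mpr ?_, odd_iff_cast.mpr ?_, odd_iff_cast.mpr ?_,
        even_iff_cast.mpr ?_⟩ <;> (rw [entry_cast h]; simp [Wmat])
  · rintro (⟨h1, h2, h3, h4⟩ | ⟨h1, h2, h3, h4⟩)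
    · left
      apply red_eq_of_entries
      intro i j
      fin_cases i <;> fin_cases j
      · simpa using odd_iff_cast.mp h1
      · simpa using even_iff_cast.mp h2
      · simpa using even_iff_cast.mp h3
      · simpa using odd_iff_cast.mp h4
    · right
      apply red_eq_of_entries
      intro i j
      fin_cases i <;> fin_cases j
      · simpa [Wmat] using even_iff_cast.mp h1
      · simpa [Wmat] using odd_iff_cast.mp h2
      · simpa [Wmat] using odd_iff_cast.mp h3
      · simpa [Wmat] using even_iff_cast.mp h4

lemma SHm_entry (q : ℤ) (X : SL2Z) :
    ((Smat * Hm q * X : SL2Z) : Matrix (Fin 2) (Fin 2) ℤ) 1 0 =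
      (X : Matrix (Fin 2) (Fin 2) ℤ) 0 0 + 2 * (X : Matrix (Fin 2) (Fin 2) ℤ) 1 0 * q := by
  rw [Matrix.SpecialLinearGroup.coe_mul, Matrix.SpecialLinearGroup.coe_mul]
  simp [Smat, Hm, Matrix.mul_apply, Fin.sum_univ_two]
  ring

end ThetaAux

namespace ThetaAux

lemma mem_of_C : ∀ M : SL2Z, C M → M ∈ ΘS := by
  suffices H : ∀ k : ℕ, ∀ M : SL2Z, ((M : Matrix (Fin 2) (Fin 2) ℤ) 1 0).natAbs = k →
      C M → M ∈ ΘS from fun M hC => H _ M rfl hC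
  intro k
  induction k using Nat.strong_induction_on with
  | _ k ih =>
  intro M hk hC
  by_cases hc : (M : Matrix (Fin 2) (Fin 2) ℤ) 1 0 = 0
  · -- lower-triangular case
    have hdet : (M : Matrix (Fin 2) (Fin 2) ℤ) 0 0 * (M : Matrix (Fin 2) (Fin 2) ℤ) 1 1 -
        (M : Matrix (Fin 2) (Fin 2) ℤ) 0 1 * (M : Matrix (Fin 2) (Fin 2) ℤ) 1 0 = 1 := by
      have := M.property
      rw [Matrix.det_fin_two] at this
      exact this
    rw [hc, mul_zero, sub_zero] at hdet
    have hM1 : red M = 1 := by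
      rcases hC with h | h
      · exact h
      · exfalso
        have h10 := entry_cast h 1 0
        rw [hc] at h10
        simp [Wmat] at h10
    have hb : Even ((M : Matrix (Fin 2) (Fin 2) ℤ) 0 1) :=
      even_iff_cast.mpr (by have := entry_cast hM1 0 1; simpa using this)
    obtain ⟨m, hm⟩ := hb
    rcases Int.eq_one_or_neg_one_of_mul_eq_one' hdet with ⟨h1, h2⟩ | ⟨h1, h2⟩
    · have : M = Hm m := by
        ext i j
        fin_cases i <;> fin_cases j <;>
          simp [Hm, h1, h2, hc, hm] <;> ring
      rw [this]; exact Hm_mem m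
    · have : M = (-1 : SL2Z) * Hm (-m) := by
        rw [neg_one_mul]
        ext i j
        rw [Matrix.SpecialLinearGroup.coe_neg]
        fin_cases i <;> fin_cases j <;>
          simp [Hm, h1, h2, hc, hm] <;> ring
      rw [this]
      exact Subgroup.mul_mem _ neg_one_mem (Hm_mem (-m))
  · -- descent case
    set a := (M : Matrix (Fin 2) (Fin 2) ℤ) 0 0 with ha
    set c := (M : Matrix (Fin 2) (Fin 2) ℤ) 1 0 with hcdef
    have hpar : a % 2 ≠ c % 2 := by
      rcases hC with h | h
      · have h1 : (a : ZMod 2) = 1 := by have := entry_cast h 0 0; simpa using this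
        have h2 : (c : ZMod 2) = 0 := by have := entry_cast h 1 0; simpa using this
        have h1' := Int.odd_iff.mp (odd_iff_cast.mpr h1)
        have h2' := Int.even_iff.mp (even_iff_cast.mpr h2)
        omega
      · have h1 : (a : ZMod 2) = 0 := by
          have := entry_cast h 0 0; simpa [Wmat] using this
        have h2 : (c : ZMod 2) = 1 := by
          have := entry_cast h 1 0; simpa [Wmat] using this
        have h1' := Int.even_iff.mp (even_iff_cast.mpr h1)
        have h2' := Int.odd_iff.mp (odd_iff_cast.mpr h2)
        omega
    obtain ⟨q, hq⟩ : ∃ q : ℤ, (a + 2 * c * q).natAbs < c.natAbs := by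
      have hna : c.natAbs ≠ 0 := Int.natAbs_ne_zero.mpr hc
      obtain ⟨X, hX⟩ : ∃ X : ℤ, X = (c.natAbs : ℤ) := ⟨_, rfl⟩
      obtain ⟨e, r, h3, h1, h2⟩ :
          ∃ e r : ℤ, 2 * X * e + r = a ∧ 0 ≤ r ∧ r < 2 * X := by
        refine ⟨a / (2 * X), a % (2 * X), Int.mul_ediv_add_emod a _,
          Int.emod_nonneg a ?_, Int.emod_lt_of_pos a ?_⟩ <;> omega
      obtain ⟨p, hp⟩ : ∃ p : ℤ, 2 * p + r = a := ⟨X * e, by linear_combination h3⟩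
      rcases lt_or_ge r X with hrc | hrc
      · rcases le_or_gt 0 c with hc0 | hc0
        · refine ⟨-e, ?_⟩
          have hc2 : c = X := by omega
          have hval : a + 2 * c * (-e) = r := by rw [hc2]; linear_combination -h3
          rw [hval]; omega
        · refine ⟨e, ?_⟩
          have hc2 : c = -X := by omega
          have hval : a + 2 * c * e = r := by rw [hc2]; linear_combination -h3
          rw [hval]; omega
      · rcases le_or_gt 0 c with hc0 | hc0
        · refine ⟨-e - 1, ?_⟩
          have hc2 : c = X := by omega
          have hval : a + 2 * c * (-e - 1) = r - 2 * X := by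
            rw [hc2]; linear_combination -h3
          rw [hval]; omega
        · refine ⟨e + 1, ?_⟩
          have hc2 : c = -X := by omega
          have hval : a + 2 * c * (e + 1) = r - 2 * X := by
            rw [hc2]; linear_combination -h3
          rw [hval]; omega
    set N := Smat * Hm q * M with hN
    have hNC : C N := by
      rw [hN, mul_assoc]; exact C_smul_S (C_smul_Hm q hC)
    have hNentry : (N : Matrix (Fin 2) (Fin 2) ℤ) 1 0 = a + 2 * c * q := by
      rw [hN, SHm_entry]
    have hNmem : N ∈ ΘS := by
      refine ih ((a + 2 * c * q).natAbs) ?_ N (by rw [hNentry]) hNC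
      rw [← hk]; exact hq
    have hM : M = (Hm q)⁻¹ * (Smat⁻¹ * N) := by rw [hN]; group
    rw [hM]
    exact Subgroup.mul_mem _ (Subgroup.inv_mem _ (Hm_mem q))
      (Subgroup.mul_mem _ (Subgroup.inv_mem _ Smat_mem) hNmem)

end ThetaAux

/-- The subgroup of PSL(2,ℤ) generated by z ↦ −1/z and z ↦ z + 2 consists exactly of
the Möbius transformations z ↦ (az+b)/(cz+d) with ad − bc = 1 and matrix congruent
mod 2 to the identity or to the antidiagonal matrix. -/
theorem theta_group_eq_congruence_description (M : SL2Z) :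
    toPSL M ∈ Subgroup.closure {toPSL Smat, toPSL Hmat} ↔
      ((Odd ((M : Matrix (Fin 2) (Fin 2) ℤ) 0 0) ∧ Even ((M : Matrix (Fin 2) (Fin 2) ℤ) 0 1) ∧
        Even ((M : Matrix (Fin 2) (Fin 2) ℤ) 1 0) ∧ Odd ((M : Matrix (Fin 2) (Fin 2) ℤ) 1 1)) ∨
       (Even ((M : Matrix (Fin 2) (Fin 2) ℤ) 0 0) ∧ Odd ((M : Matrix (Fin 2) (Fin 2) ℤ) 0 1) ∧
        Odd ((M : Matrix (Fin 2) (Fin 2) ℤ) 1 0) ∧ Even ((M : Matrix (Fin 2) (Fin 2) ℤ) 1 1))) := by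
  rw [ThetaAux.psl_iff]
  exact ⟨fun h => (ThetaAux.C_iff M).mp (ThetaAux.C_of_mem h),
    fun h => ThetaAux.mem_of_C M ((ThetaAux.C_iff M).mpr h)⟩
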